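/- Let t ≥ 0 and let α_0,…,α_t be real numbers, none equal to −1. Let s = #{0 ≤ j ≤ t : α_j > −1}. Then Σ_{ℓ_0+⋯+ℓ_t = ℓ} ℓ_0^{α_0} ⋯ ℓ_t^{α_t} = O(ℓ^{s−1+Σ_{α_j>−1} α_j}) as ℓ → ∞, where the sum runs over all tuples of positive integers (ℓ_0,…,ℓ_t) summing to ℓ. -/

import Mathlib

open Finset

lemma mvt_step (a : ℝ) (x : ℝ) (hx : 1 ≤ x) :
    ∃ c, x < c ∧ c < x + 1 ∧ (x + 1) ^ (a + 1) - x ^ (a + 1) = (a + 1) * c ^ a := by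
  have hx0 : 0 < x := lt_of_lt_of_le one_pos hx
  have hcont : ContinuousOn (fun y : ℝ => y ^ (a + 1)) (Set.Icc x (x + 1)) := by
    apply ContinuousOn.rpow_const continuousOn_id
    intro y hy
    exact Or.inl (ne_of_gt (lt_of_lt_of_le hx0 hy.1))
  have hderiv : ∀ y ∈ Set.Ioo x (x + 1),
      HasDerivAt (fun y : ℝ => y ^ (a + 1)) ((a + 1) * y ^ a) y := by
    intro y hy
    have := Real.hasDerivAt_rpow_const (x := y) (p := a + 1)
      (Or.inl (ne_of_gt (lt_trans hx0 hy.1)))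
    simpa [add_sub_cancel_right] using this
  obtain ⟨c, hc, hceq⟩ := exists_hasDerivAt_eq_slope (fun y : ℝ => y ^ (a + 1))
    (fun y => (a + 1) * y ^ a) (by linarith) hcont hderiv
  refine ⟨c, hc.1, hc.2, ?_⟩
  rw [hceq]
  field_simp
  ring

lemma rpow_step_aux (a : ℝ) (ha : a < 0) (m : ℕ) (hm : 2 ≤ m) :
    ∃ c : ℝ, (m:ℝ) ^ a < c ^ a ∧ (m : ℝ) ^ (a + 1) - ((m : ℝ) - 1) ^ (a + 1) = (a + 1) * c ^ a := by
  have hx : (1 : ℝ) ≤ (m : ℝ) - 1 := by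
    have : (2 : ℝ) ≤ (m : ℝ) := by exact_mod_cast hm
    linarith
  obtain ⟨c, hc1, hc2, hceq⟩ := mvt_step a ((m : ℝ) - 1) hx
  have hme : (m : ℝ) - 1 + 1 = (m : ℝ) := by ring
  rw [hme] at hc2 hceq
  have hc0 : 0 < c := lt_of_le_of_lt (by linarith) hc1
  exact ⟨c, Real.rpow_lt_rpow_of_neg hc0 hc2 ha, hceq⟩

lemma rpow_le_step_pos (a : ℝ) (ha : -1 < a) (ha' : a < 0) (m : ℕ) (hm : 2 ≤ m) :
    (a + 1) * (m : ℝ) ^ a ≤ (m : ℝ) ^ (a + 1) - ((m : ℝ) - 1) ^ (a + 1) := by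
  obtain ⟨c, hca, hceq⟩ := rpow_step_aux a ha' m hm
  rw [hceq]
  have : 0 < a + 1 := by linarith
  nlinarith

lemma rpow_le_step_neg (a : ℝ) (ha : a < -1) (m : ℕ) (hm : 2 ≤ m) :
    (-(a + 1)) * (m : ℝ) ^ a ≤ ((m : ℝ) - 1) ^ (a + 1) - (m : ℝ) ^ (a + 1) := by
  obtain ⟨c, hca, hceq⟩ := rpow_step_aux a (by linarith) m hm
  have : ((m : ℝ) - 1) ^ (a + 1) - (m : ℝ) ^ (a + 1) = (-(a+1)) * c ^ a := by
    rw [← neg_sub, hceq]; ring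
  rw [this]
  have : 0 < -(a + 1) := by linarith
  nlinarith

lemma sum_rpow_bound (a : ℝ) (ha : a ≠ -1) :
    ∃ C, 0 < C ∧ ∀ ℓ : ℕ, 1 ≤ ℓ →
      ∑ m ∈ Finset.Icc 1 ℓ, (m : ℝ) ^ a ≤ C * (ℓ : ℝ) ^ (max (a + 1) 0) := by
  rcases le_or_gt 0 a with h0 | h0
  · -- a ≥ 0
    refine ⟨1, one_pos, fun ℓ hℓ => ?_⟩
    have hℓ0 : (0 : ℝ) < (ℓ : ℝ) := by exact_mod_cast hℓ
    have hmax : max (a + 1) 0 = a + 1 := by rw [max_eq_left]; linarith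
    rw [hmax, one_mul]
    calc ∑ m ∈ Finset.Icc 1 ℓ, (m : ℝ) ^ a
        ≤ ∑ m ∈ Finset.Icc 1 ℓ, (ℓ : ℝ) ^ a := by
          apply Finset.sum_le_sum
          intro m hm
          exact Real.rpow_le_rpow (Nat.cast_nonneg m)
            (by exact_mod_cast (Finset.mem_Icc.mp hm).2) h0
      _ = (ℓ : ℝ) * (ℓ : ℝ) ^ a := by
          rw [Finset.sum_const, Nat.card_Icc]; simp [nsmul_eq_mul]
      _ = (ℓ : ℝ) ^ (a + 1) := by
          rw [Real.rpow_add hℓ0, Real.rpow_one]; ring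
  · rcases lt_or_gt_of_ne ha with hlt | hgt
    · -- a < -1
      have hne : (0:ℝ) < -(a + 1) := by linarith
      refine ⟨1 + 1 / (-(a+1)), by positivity, fun ℓ hℓ => ?_⟩
      have hmax : max (a + 1) 0 = 0 := by rw [max_eq_right]; linarith
      rw [hmax, Real.rpow_zero, mul_one]
      have hsplit : Finset.Icc 1 ℓ = insert 1 (Finset.Icc 2 ℓ) := by
        ext x; simp [Finset.mem_Icc, Finset.mem_insert]; omega
      rw [hsplit, Finset.sum_insert (by simp)]
      have h1 : ((1:ℕ) : ℝ) ^ a = 1 := by norm_num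
      rw [h1]
      have tel : ∑ m ∈ Finset.Icc 2 ℓ, (((m : ℝ) - 1) ^ (a + 1) - (m : ℝ) ^ (a + 1))
          = 1 - (ℓ : ℝ) ^ (a + 1) := by
        rw [← Finset.Ico_add_one_right_eq_Icc, Finset.sum_Ico_eq_sum_range]
        have : ∀ k : ℕ, (((2 + k : ℕ) : ℝ) - 1) ^ (a + 1) - ((2 + k : ℕ) : ℝ) ^ (a + 1)
            = (fun i : ℕ => ((i : ℝ) + 1) ^ (a + 1)) k
              - (fun i : ℕ => ((i : ℝ) + 1) ^ (a + 1)) (k + 1) := by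
          intro k; push_cast; ring_nf
        simp only [this]
        rw [Finset.sum_range_sub' (fun i : ℕ => ((i : ℝ) + 1) ^ (a + 1))]
        have h1 : ℓ + 1 - 2 = ℓ - 1 := by omega
        have h2 : ((ℓ - 1 : ℕ) : ℝ) + 1 = (ℓ : ℝ) := by
          have := Nat.cast_sub (R := ℝ) hℓ; push_cast at this ⊢; linarith
        rw [h1, h2]
        norm_num
      have key : ∑ m ∈ Finset.Icc 2 ℓ, (m : ℝ) ^ a ≤ 1 / (-(a+1)) := by
        have step : ∀ m ∈ Finset.Icc 2 ℓ, (m : ℝ) ^ a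
            ≤ (((m : ℝ) - 1) ^ (a + 1) - (m : ℝ) ^ (a + 1)) / (-(a+1)) := by
          intro m hm
          rw [le_div_iff₀ hne]
          have := rpow_le_step_neg a hlt m (Finset.mem_Icc.mp hm).1
          linarith
        calc ∑ m ∈ Finset.Icc 2 ℓ, (m : ℝ) ^ a
            ≤ ∑ m ∈ Finset.Icc 2 ℓ, (((m : ℝ) - 1) ^ (a + 1) - (m : ℝ) ^ (a + 1)) / (-(a+1)) :=
              Finset.sum_le_sum step
          _ = (∑ m ∈ Finset.Icc 2 ℓ, (((m : ℝ) - 1) ^ (a + 1) - (m : ℝ) ^ (a + 1))) / (-(a+1)) :=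
              (Finset.sum_div _ _ _).symm
          _ ≤ 1 / (-(a+1)) := by
              gcongr
              rw [tel]
              have : (0:ℝ) ≤ (ℓ : ℝ) ^ (a + 1) := Real.rpow_nonneg (Nat.cast_nonneg ℓ) _
              linarith
      linarith
    · -- -1 < a < 0
      have hpos : (0:ℝ) < a + 1 := by linarith
      refine ⟨1 / (a + 1), by positivity, fun ℓ hℓ => ?_⟩
      have hmax : max (a + 1) 0 = a + 1 := by rw [max_eq_left]; linarith
      rw [hmax]
      have tel : ∑ m ∈ Finset.Icc 1 ℓ, ((m : ℝ) ^ (a + 1) - ((m : ℝ) - 1) ^ (a + 1))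
          = (ℓ : ℝ) ^ (a + 1) := by
        rw [← Finset.Ico_add_one_right_eq_Icc, Finset.sum_Ico_eq_sum_range]
        have : ∀ k : ℕ, ((1 + k : ℕ) : ℝ) ^ (a + 1) - (((1 + k : ℕ) : ℝ) - 1) ^ (a + 1)
            = (fun i : ℕ => ((i : ℝ)) ^ (a + 1)) (k + 1)
              - (fun i : ℕ => ((i : ℝ)) ^ (a + 1)) k := by
          intro k; push_cast; ring_nf
        simp only [this]
        rw [Finset.sum_range_sub (fun i : ℕ => ((i : ℝ)) ^ (a + 1))]
        have h1 : ℓ + 1 - 1 = ℓ := by omega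
        rw [h1]
        simp [Real.zero_rpow (by linarith : a + 1 ≠ 0)]
      have step : ∀ m ∈ Finset.Icc 1 ℓ, (m : ℝ) ^ a
          ≤ ((m : ℝ) ^ (a + 1) - ((m : ℝ) - 1) ^ (a + 1)) / (a + 1) := by
        intro m hm
        rw [le_div_iff₀ hpos]
        rcases eq_or_lt_of_le (Finset.mem_Icc.mp hm).1 with h1 | h2
        · -- m = 1
          rw [← h1]
          push_cast
          rw [Real.one_rpow, Real.one_rpow]
          norm_num
          rw [Real.zero_rpow (by linarith : a + 1 ≠ 0)]
          linarith
        · have := rpow_le_step_pos a hgt h0 m h2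
          linarith
      calc ∑ m ∈ Finset.Icc 1 ℓ, (m : ℝ) ^ a
          ≤ ∑ m ∈ Finset.Icc 1 ℓ, ((m : ℝ) ^ (a + 1) - ((m : ℝ) - 1) ^ (a + 1)) / (a + 1) :=
            Finset.sum_le_sum step
        _ = (∑ m ∈ Finset.Icc 1 ℓ, ((m : ℝ) ^ (a + 1) - ((m : ℝ) - 1) ^ (a + 1))) / (a + 1) :=
            (Finset.sum_div _ _ _).symm
        _ = 1 / (a + 1) * (ℓ : ℝ) ^ (a + 1) := by rw [tel]; ring

/-- Half convolution: sum over `1 ≤ m ≤ ℓ/2`. -/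
lemma conv_half (a b : ℝ) (ha : a ≠ -1) :
    ∃ C, 0 < C ∧ ∀ ℓ : ℕ, 2 ≤ ℓ →
      ∑ m ∈ Finset.Icc 1 (ℓ / 2), (m : ℝ) ^ a * ((ℓ - m : ℕ) : ℝ) ^ b
        ≤ C * (ℓ : ℝ) ^ (max (a + b + 1) b) := by
  obtain ⟨C, hC, hbound⟩ := sum_rpow_bound a ha
  set K : ℝ := max 1 ((2:ℝ) ^ (-b)) with hK
  have hK0 : 0 < K := lt_of_lt_of_le one_pos (le_max_left _ _)
  refine ⟨K * C, by positivity, fun ℓ hℓ => ?_⟩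
  have hℓ1 : 1 ≤ ℓ := by omega
  have hℓ0 : (0:ℝ) < (ℓ : ℝ) := by exact_mod_cast hℓ1
  have hhalf : 1 ≤ ℓ / 2 := by omega
  -- each factor (ℓ - m)^b ≤ K * ℓ^b
  have hfac : ∀ m ∈ Finset.Icc 1 (ℓ / 2), ((ℓ - m : ℕ) : ℝ) ^ b ≤ K * (ℓ : ℝ) ^ b := by
    intro m hm
    obtain ⟨hm1, hm2⟩ := Finset.mem_Icc.mp hm
    have hlm : ℓ / 2 ≤ ℓ - m := by omega
    have hlm' : ((ℓ:ℝ)) / 2 ≤ ((ℓ - m : ℕ) : ℝ) := by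
      have h2 : ℓ ≤ 2 * (ℓ - m) := by omega
      have h2' : (ℓ:ℝ) ≤ 2 * ((ℓ - m : ℕ) : ℝ) := by exact_mod_cast h2
      linarith
    have hlmpos : (0:ℝ) < ((ℓ - m : ℕ) : ℝ) := lt_of_lt_of_le (by linarith) hlm'
    rcases le_or_gt 0 b with hb | hb
    · have h6 : ((ℓ - m : ℕ) : ℝ) ≤ (ℓ:ℝ) := by
        have : ℓ - m ≤ ℓ := by omega
        exact_mod_cast this
      calc ((ℓ - m : ℕ) : ℝ) ^ b ≤ (ℓ:ℝ) ^ b := Real.rpow_le_rpow (le_of_lt hlmpos) h6 hb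
        _ ≤ K * (ℓ:ℝ) ^ b := by
          nlinarith [Real.rpow_nonneg (le_of_lt hℓ0) b, le_max_left 1 ((2:ℝ) ^ (-b))]
    · calc ((ℓ - m : ℕ) : ℝ) ^ b ≤ ((ℓ:ℝ)/2) ^ b :=
            Real.rpow_le_rpow_of_nonpos (by linarith) hlm' (le_of_lt hb)
        _ = (2:ℝ)^(-b) * (ℓ:ℝ) ^ b := by
            rw [Real.div_rpow (le_of_lt hℓ0) (by norm_num), Real.rpow_neg (by norm_num)]
            field_simp
        _ ≤ K * (ℓ:ℝ) ^ b := by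
          have := Real.rpow_nonneg (le_of_lt hℓ0) b
          nlinarith [le_max_right 1 ((2:ℝ) ^ (-b))]
  calc ∑ m ∈ Finset.Icc 1 (ℓ / 2), (m : ℝ) ^ a * ((ℓ - m : ℕ) : ℝ) ^ b
      ≤ ∑ m ∈ Finset.Icc 1 (ℓ / 2), (m : ℝ) ^ a * (K * (ℓ : ℝ) ^ b) := by
        apply Finset.sum_le_sum
        intro m hm
        exact mul_le_mul_of_nonneg_left (hfac m hm) (Real.rpow_nonneg (Nat.cast_nonneg m) a)
    _ = (K * (ℓ : ℝ) ^ b) * ∑ m ∈ Finset.Icc 1 (ℓ / 2), (m : ℝ) ^ a := by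
        rw [Finset.mul_sum]; apply Finset.sum_congr rfl; intros; ring
    _ ≤ (K * (ℓ : ℝ) ^ b) * (C * ((ℓ / 2 : ℕ) : ℝ) ^ (max (a + 1) 0)) := by
        apply mul_le_mul_of_nonneg_left (hbound _ hhalf)
        positivity
    _ ≤ (K * (ℓ : ℝ) ^ b) * (C * (ℓ : ℝ) ^ (max (a + 1) 0)) := by
        apply mul_le_mul_of_nonneg_left ?_ (by positivity)
        apply mul_le_mul_of_nonneg_left ?_ (le_of_lt hC)
        apply Real.rpow_le_rpow (Nat.cast_nonneg _) ?_ (le_max_right _ _)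
        exact_mod_cast Nat.div_le_self ℓ 2
    _ = K * C * ((ℓ : ℝ) ^ b * (ℓ : ℝ) ^ (max (a + 1) 0)) := by ring
    _ = K * C * (ℓ : ℝ) ^ (max (a + b + 1) b) := by
        rw [← Real.rpow_add hℓ0]
        congr 1
        rw [← max_add_add_left]
        ring_nf

lemma conv_full (a b : ℝ) (ha : a ≠ -1) (hb : b ≠ -1) :
    ∃ C, 0 < C ∧ ∀ ℓ : ℕ, 2 ≤ ℓ →
      ∑ m ∈ Finset.Icc 1 (ℓ - 1), (m : ℝ) ^ a * ((ℓ - m : ℕ) : ℝ) ^ b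
        ≤ C * (ℓ : ℝ) ^ (max a (max b (a + b + 1))) := by
  obtain ⟨C1, hC1, h1⟩ := conv_half a b ha
  obtain ⟨C2, hC2, h2⟩ := conv_half b a hb
  refine ⟨C1 + C2, by positivity, fun ℓ hℓ => ?_⟩
  have hℓ0 : (1:ℝ) ≤ (ℓ : ℝ) := by exact_mod_cast (by omega : 1 ≤ ℓ)
  -- split the sum
  have hsplit : ∑ m ∈ Finset.Icc 1 (ℓ - 1), (m : ℝ) ^ a * ((ℓ - m : ℕ) : ℝ) ^ b
      = (∑ m ∈ Finset.Icc 1 (ℓ / 2), (m : ℝ) ^ a * ((ℓ - m : ℕ) : ℝ) ^ b)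
        + ∑ m ∈ Finset.Ico (ℓ / 2 + 1) ℓ, (m : ℝ) ^ a * ((ℓ - m : ℕ) : ℝ) ^ b := by
    have hIcoIcc : Finset.Icc 1 (ℓ - 1) = Finset.Ico 1 ℓ := by
      ext x; simp only [Finset.mem_Icc, Finset.mem_Ico]; omega
    rw [hIcoIcc, ← Finset.sum_Ico_consecutive _ (by omega : 1 ≤ ℓ / 2 + 1)
      (by omega : ℓ / 2 + 1 ≤ ℓ), Finset.Ico_add_one_right_eq_Icc]
  -- reflect the upper half
  have hrefl : ∑ m ∈ Finset.Ico (ℓ / 2 + 1) ℓ, (m : ℝ) ^ a * ((ℓ - m : ℕ) : ℝ) ^ b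
      = ∑ k ∈ Finset.Icc 1 (ℓ - ℓ / 2 - 1), (k : ℝ) ^ b * ((ℓ - k : ℕ) : ℝ) ^ a := by
    apply Finset.sum_nbij' (i := fun m => ℓ - m) (j := fun k => ℓ - k)
    · intro m hm; simp only [Finset.mem_Ico] at hm; simp only [Finset.mem_Icc]; omega
    · intro k hk; simp only [Finset.mem_Icc] at hk; simp only [Finset.mem_Ico]; omega
    · intro m hm; simp only [Finset.mem_Ico] at hm; omega
    · intro k hk; simp only [Finset.mem_Icc] at hk; omega
    · intro m hm
      simp only [Finset.mem_Ico] at hm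
      have : ℓ - (ℓ - m) = m := by omega
      rw [this, mul_comm]
  have hsub : ∑ k ∈ Finset.Icc 1 (ℓ - ℓ / 2 - 1), (k : ℝ) ^ b * ((ℓ - k : ℕ) : ℝ) ^ a
      ≤ ∑ k ∈ Finset.Icc 1 (ℓ / 2), (k : ℝ) ^ b * ((ℓ - k : ℕ) : ℝ) ^ a := by
    apply Finset.sum_le_sum_of_subset_of_nonneg
    · apply Finset.Icc_subset_Icc_right; omega
    · intro k _ _; positivity
  have e1 : max (a + b + 1) b ≤ max a (max b (a + b + 1)) :=
    max_le (le_max_of_le_right (le_max_right _ _)) (le_max_of_le_right (le_max_left _ _))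
  have e2 : max (b + a + 1) a ≤ max a (max b (a + b + 1)) := by
    rw [show b + a + 1 = a + b + 1 by ring]
    exact max_le (le_max_of_le_right (le_max_right _ _)) (le_max_left _ _)
  have p1 := (h1 ℓ hℓ).trans (mul_le_mul_of_nonneg_left
    (Real.rpow_le_rpow_of_exponent_le hℓ0 e1) (le_of_lt hC1))
  have p2 := (h2 ℓ hℓ).trans (mul_le_mul_of_nonneg_left
    (Real.rpow_le_rpow_of_exponent_le hℓ0 e2) (le_of_lt hC2))
  rw [hsplit, hrefl]
  calc _ ≤ C1 * (ℓ:ℝ) ^ (max a (max b (a + b + 1)))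
        + ∑ k ∈ Finset.Icc 1 (ℓ / 2), (k : ℝ) ^ b * ((ℓ - k : ℕ) : ℝ) ^ a :=
        add_le_add p1 hsub
    _ ≤ C1 * (ℓ:ℝ) ^ (max a (max b (a + b + 1))) + C2 * (ℓ:ℝ) ^ (max a (max b (a + b + 1))) :=
        add_le_add_right p2 _
    _ = (C1 + C2) * (ℓ : ℝ) ^ (max a (max b (a + b + 1))) := by ring

noncomputable def compSum (t : ℕ) (α : Fin (t + 1) → ℝ) (ℓ : ℕ) : ℝ :=
  ∑ f ∈ (Fintype.piFinset fun _ : Fin (t + 1) => Finset.Icc 1 ℓ).filter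
      (fun f => ∑ i, f i = ℓ),
    ∏ i, (f i : ℝ) ^ (α i)

lemma compSum_nonneg (t : ℕ) (α : Fin (t + 1) → ℝ) (ℓ : ℕ) : 0 ≤ compSum t α ℓ := by
  apply Finset.sum_nonneg
  intro f _
  apply Finset.prod_nonneg
  intro i _
  exact Real.rpow_nonneg (Nat.cast_nonneg _) _

lemma compSum_zero (α : Fin 1 → ℝ) (ℓ : ℕ) (hℓ : 1 ≤ ℓ) :
    compSum 0 α ℓ = (ℓ : ℝ) ^ (α 0) := by
  unfold compSum
  have : (Fintype.piFinset fun _ : Fin 1 => Finset.Icc 1 ℓ).filter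
      (fun f => ∑ i, f i = ℓ) = {fun _ => ℓ} := by
    ext f
    simp only [Finset.mem_filter, Fintype.mem_piFinset, Finset.mem_Icc,
      Fin.sum_univ_one, Finset.mem_singleton]
    constructor
    · rintro ⟨_, h2⟩
      funext i
      have : i = 0 := Subsingleton.elim _ _
      rw [this, h2]
    · rintro rfl
      exact ⟨fun _ => ⟨hℓ, le_refl _⟩, rfl⟩
  rw [this, Finset.sum_singleton, Fin.prod_univ_one]

lemma compSum_succ (t : ℕ) (α : Fin (t + 2) → ℝ) (ℓ : ℕ) :
    compSum (t + 1) α ℓ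
      = ∑ m ∈ Finset.Icc 1 (ℓ - 1),
          (m : ℝ) ^ (α (Fin.last (t + 1))) * compSum t (fun i => α i.castSucc) (ℓ - m) := by
  unfold compSum
  rw [← Finset.sum_fiberwise_of_maps_to (g := fun f => f (Fin.last (t + 1)))
    (t := Finset.Icc 1 (ℓ - 1))]
  · apply Finset.sum_congr rfl
    intro m hm
    obtain ⟨hm1, hm2⟩ := Finset.mem_Icc.mp hm
    rw [Finset.mul_sum]
    apply Finset.sum_nbij' (i := fun f => Fin.init f) (j := fun g => Fin.snoc g m)
    · -- maps to
      intro f hf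
      simp only [Finset.mem_filter, Fintype.mem_piFinset, Finset.mem_Icc] at hf ⊢
      obtain ⟨⟨h1, h2⟩, h3⟩ := hf
      have hsum : ∑ i : Fin (t + 1), f i.castSucc + f (Fin.last (t + 1)) = ℓ := by
        rw [← Fin.sum_univ_castSucc]; exact h2
      rw [h3] at hsum
      refine ⟨fun i => ⟨(h1 i.castSucc).1, ?_⟩, ?_⟩
      · show f i.castSucc ≤ ℓ - m
        have hle : f i.castSucc ≤ ∑ i : Fin (t + 1), f i.castSucc :=
          Finset.single_le_sum (f := fun j : Fin (t + 1) => f j.castSucc)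
            (fun j _ => Nat.zero_le _) (Finset.mem_univ i)
        omega
      · show ∑ i : Fin (t + 1), Fin.init f i = ℓ - m
        have : ∀ i : Fin (t + 1), Fin.init f i = f i.castSucc := fun i => rfl
        simp only [this]
        omega
    · -- inverse maps to
      intro g hg
      simp only [Finset.mem_filter, Fintype.mem_piFinset, Finset.mem_Icc] at hg ⊢
      obtain ⟨h1, h2⟩ := hg
      constructor
      · constructor
        · intro i
          refine Fin.lastCases ?_ ?_ i
          · rw [Fin.snoc_last]; omega
          · intro j
            rw [Fin.snoc_castSucc]
            exact ⟨(h1 j).1, le_trans (h1 j).2 (by omega)⟩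
        · rw [Fin.sum_univ_castSucc]
          simp only [Fin.snoc_castSucc, Fin.snoc_last]
          omega
      · rw [Fin.snoc_last]
    · -- left inverse
      intro f hf
      simp only [Finset.mem_filter] at hf
      have : f (Fin.last (t + 1)) = m := hf.2
      rw [← this]
      exact Fin.snoc_init_self f
    · -- right inverse
      intro g _
      simp
    · -- values
      intro f hf
      simp only [Finset.mem_filter] at hf
      rw [Fin.prod_univ_castSucc]
      have h1 : ∀ i : Fin (t + 1), Fin.init f i = f i.castSucc := fun i => rfl
      rw [hf.2]
      simp only [h1]
      ring
  · -- maps to for fiberwise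
    intro f hf
    simp only [Finset.mem_filter, Fintype.mem_piFinset, Finset.mem_Icc] at hf
    obtain ⟨h1, h2⟩ := hf
    have hsum : ∑ i : Fin (t + 1), f i.castSucc + f (Fin.last (t + 1)) = ℓ := by
      rw [← Fin.sum_univ_castSucc]; exact h2
    have hge : t + 1 ≤ ∑ i : Fin (t + 1), f i.castSucc := by
      calc t + 1 = ∑ _i : Fin (t + 1), 1 := by simp
        _ ≤ ∑ i : Fin (t + 1), f i.castSucc :=
          Finset.sum_le_sum (fun i _ => (h1 i.castSucc).1)
    simp only [Finset.mem_Icc]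
    have := (h1 (Fin.last (t + 1))).1
    omega

noncomputable def expB (t : ℕ) (α : Fin (t + 1) → ℝ) : ℝ :=
  if (Finset.univ.filter fun j => -1 < α j).Nonempty then
    ((Finset.univ.filter fun j => -1 < α j).card : ℝ) - 1 +
      ∑ j ∈ Finset.univ.filter (fun j => -1 < α j), α j
  else Finset.univ.sup' Finset.univ_nonempty α

lemma expB_gt (t : ℕ) (α : Fin (t + 1) → ℝ)
    (h : (Finset.univ.filter fun j => -1 < α j).Nonempty) : -1 < expB t α := by
  rw [expB, if_pos h]
  have hsum : ∑ j ∈ Finset.univ.filter (fun j => -1 < α j), (-1 : ℝ)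
      < ∑ j ∈ Finset.univ.filter (fun j => -1 < α j), α j := by
    apply Finset.sum_lt_sum_of_nonempty h
    intro j hj
    exact (Finset.mem_filter.mp hj).2
  rw [Finset.sum_const] at hsum
  simp only [nsmul_eq_mul, mul_neg, mul_one] at hsum
  linarith

lemma expB_lt (t : ℕ) (α : Fin (t + 1) → ℝ) (hα : ∀ j, α j ≠ -1)
    (h : ¬ (Finset.univ.filter fun j => -1 < α j).Nonempty) : expB t α < -1 := by
  rw [expB, if_neg h]
  rw [Finset.not_nonempty_iff_eq_empty, Finset.filter_eq_empty_iff] at h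
  rw [Finset.sup'_lt_iff]
  intro j hj
  exact lt_of_le_of_ne (not_lt.mp (h hj)) (hα j)

lemma expB_ne (t : ℕ) (α : Fin (t + 1) → ℝ) (hα : ∀ j, α j ≠ -1) : expB t α ≠ -1 := by
  by_cases h : (Finset.univ.filter fun j => -1 < α j).Nonempty
  · exact ne_of_gt (expB_gt t α h)
  · exact ne_of_lt (expB_lt t α hα h)

lemma expB_zero (α : Fin 1 → ℝ) : expB 0 α = α 0 := by
  rw [expB]
  by_cases h : (-1 : ℝ) < α 0
  · have hfil : (Finset.univ.filter fun j : Fin 1 => -1 < α j) = Finset.univ := by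
      apply Finset.filter_true_of_mem
      intro j _
      have : j = 0 := Subsingleton.elim _ _
      rw [this]; exact h
    rw [if_pos]
    · rw [hfil]
      simp [Fin.sum_univ_one]
    · rw [hfil]; exact Finset.univ_nonempty
  · have hfil : (Finset.univ.filter fun j : Fin 1 => -1 < α j) = ∅ := by
      rw [Finset.filter_eq_empty_iff]
      intro j _
      have : j = 0 := Subsingleton.elim _ _
      rw [this]; exact h
    rw [if_neg (by rw [hfil]; exact Finset.not_nonempty_empty)]
    exact le_antisymm (Finset.sup'_le _ _ fun j _ => by rw [Fin.eq_zero j])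
      (Finset.le_sup' α (Finset.mem_univ 0))

lemma sup'_split (t : ℕ) (α : Fin (t + 2) → ℝ) :
    (Finset.univ : Finset (Fin (t + 2))).sup' Finset.univ_nonempty α
      = max ((Finset.univ : Finset (Fin (t + 1))).sup' Finset.univ_nonempty
          (fun i => α i.castSucc)) (α (Fin.last (t + 1))) := by
  apply le_antisymm
  · apply Finset.sup'_le
    intro j _
    rcases Fin.eq_castSucc_or_eq_last j with ⟨i, rfl⟩ | rfl
    · exact le_trans (Finset.le_sup' (fun i : Fin (t + 1) => α i.castSucc)
        (Finset.mem_univ i)) (le_max_left _ _)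
    · exact le_max_right _ _
  · apply max_le
    · apply Finset.sup'_le
      intro i _
      exact Finset.le_sup' α (Finset.mem_univ i.castSucc)
    · exact Finset.le_sup' α (Finset.mem_univ (Fin.last (t + 1)))

lemma filter_card_split (t : ℕ) (α : Fin (t + 2) → ℝ) :
    ((Finset.univ : Finset (Fin (t + 2))).filter fun j => -1 < α j).card
      = ((Finset.univ : Finset (Fin (t + 1))).filter fun i => -1 < α i.castSucc).card
        + (if -1 < α (Fin.last (t + 1)) then 1 else 0) := by
  rw [Finset.card_filter, Finset.card_filter, Fin.sum_univ_castSucc]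

lemma filter_sum_split (t : ℕ) (α : Fin (t + 2) → ℝ) :
    ∑ j ∈ (Finset.univ : Finset (Fin (t + 2))).filter (fun j => -1 < α j), α j
      = (∑ i ∈ (Finset.univ : Finset (Fin (t + 1))).filter (fun i => -1 < α i.castSucc),
          α i.castSucc)
        + (if -1 < α (Fin.last (t + 1)) then α (Fin.last (t + 1)) else 0) := by
  rw [Finset.sum_filter, Finset.sum_filter, Fin.sum_univ_castSucc]

lemma filter_nonempty_split (t : ℕ) (α : Fin (t + 2) → ℝ) :
    ((Finset.univ : Finset (Fin (t + 2))).filter fun j => -1 < α j).Nonempty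
      ↔ ((Finset.univ : Finset (Fin (t + 1))).filter fun i => -1 < α i.castSucc).Nonempty
        ∨ -1 < α (Fin.last (t + 1)) := by
  simp only [Finset.filter_nonempty_iff, Finset.mem_univ, true_and]
  constructor
  · rintro ⟨j, hj⟩
    rcases Fin.eq_castSucc_or_eq_last j with ⟨i, rfl⟩ | rfl
    · exact Or.inl ⟨i, hj⟩
    · exact Or.inr hj
  · rintro (⟨i, hi⟩ | h)
    · exact ⟨i.castSucc, hi⟩
    · exact ⟨Fin.last (t + 1), h⟩

lemma expB_succ (t : ℕ) (α : Fin (t + 2) → ℝ) (hα : ∀ j, α j ≠ -1) :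
    expB (t + 1) α
      = max (α (Fin.last (t + 1)))
          (max (expB t (fun i => α i.castSucc))
            (α (Fin.last (t + 1)) + expB t (fun i => α i.castSucc) + 1)) := by
  set a := α (Fin.last (t + 1)) with ha_def
  set b := expB t (fun i => α i.castSucc) with hb_def
  have hα' : ∀ i : Fin (t + 1), α i.castSucc ≠ -1 := fun i => hα i.castSucc
  by_cases hlast : -1 < a
  · by_cases hP' : ((Finset.univ : Finset (Fin (t + 1))).filter
        fun i => -1 < α i.castSucc).Nonempty
    · -- b > -1, result = a + b + 1
      have hb1 : -1 < b := expB_gt t _ hP'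
      have hP : ((Finset.univ : Finset (Fin (t + 2))).filter fun j => -1 < α j).Nonempty :=
        (filter_nonempty_split t α).mpr (Or.inl hP')
      have lhs : expB (t + 1) α = a + b + 1 := by
        rw [expB, if_pos hP, filter_card_split, filter_sum_split, if_pos hlast, if_pos hlast,
          hb_def, expB, if_pos hP']
        push_cast
        ring
      rw [lhs, max_eq_right (by linarith : b ≤ a + b + 1),
        max_eq_right (by linarith : a ≤ a + b + 1)]
    · -- b < -1, a > -1, result = a
      have hb1 : b < -1 := expB_lt t _ hα' hP'
      have hP : ((Finset.univ : Finset (Fin (t + 2))).filter fun j => -1 < α j).Nonempty :=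
        (filter_nonempty_split t α).mpr (Or.inr hlast)
      have hcard : ((Finset.univ : Finset (Fin (t + 1))).filter
          fun i => -1 < α i.castSucc).card = 0 := by
        rw [Finset.card_eq_zero, ← Finset.not_nonempty_iff_eq_empty]; exact hP'
      have hsum : ∑ i ∈ (Finset.univ : Finset (Fin (t + 1))).filter
          (fun i => -1 < α i.castSucc), α i.castSucc = 0 := by
        rw [Finset.not_nonempty_iff_eq_empty.mp hP']
        exact Finset.sum_empty
      have lhs : expB (t + 1) α = a := by
        rw [expB, if_pos hP, filter_card_split, filter_sum_split, if_pos hlast, if_pos hlast,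
          hcard, hsum]
        push_cast
        ring
      rw [lhs, max_eq_left (max_le (by linarith) (by linarith))]
  · have ha1 : a < -1 := lt_of_le_of_ne (not_lt.mp hlast) (hα _)
    by_cases hP' : ((Finset.univ : Finset (Fin (t + 1))).filter
        fun i => -1 < α i.castSucc).Nonempty
    · -- a < -1, b > -1, result = b
      have hb1 : -1 < b := expB_gt t _ hP'
      have hP : ((Finset.univ : Finset (Fin (t + 2))).filter fun j => -1 < α j).Nonempty :=
        (filter_nonempty_split t α).mpr (Or.inl hP')
      have lhs : expB (t + 1) α = b := by
        rw [expB, if_pos hP, filter_card_split, filter_sum_split, if_neg hlast, if_neg hlast,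
          hb_def, expB, if_pos hP']
        push_cast
        ring
      rw [lhs, max_eq_left (by linarith : a + b + 1 ≤ b), max_eq_right (by linarith : a ≤ b)]
    · -- both < -1, result = max a b
      have hb1 : b < -1 := expB_lt t _ hα' hP'
      have hP : ¬ ((Finset.univ : Finset (Fin (t + 2))).filter fun j => -1 < α j).Nonempty := by
        rw [filter_nonempty_split]
        push_neg
        exact ⟨Finset.not_nonempty_iff_eq_empty.mp hP', not_lt.mp hlast⟩
      have lhs : expB (t + 1) α = max b a := by
        rw [expB, if_neg hP, sup'_split, hb_def, expB, if_neg hP']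
      rw [lhs]
      rw [max_comm b a]
      congr 1
      rw [max_eq_left (by linarith : a + b + 1 ≤ b)]

lemma key_bound (t : ℕ) : ∀ (α : Fin (t + 1) → ℝ), (∀ j, α j ≠ -1) →
    ∃ C, 0 < C ∧ ∀ ℓ : ℕ, 1 ≤ ℓ → compSum t α ℓ ≤ C * (ℓ : ℝ) ^ (expB t α) := by
  induction t with
  | zero =>
    intro α hα
    refine ⟨1, one_pos, fun ℓ hℓ => ?_⟩
    rw [compSum_zero α ℓ hℓ, expB_zero, one_mul]
  | succ t IH =>
    intro α hα
    set a := α (Fin.last (t + 1)) with ha_def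
    set α' : Fin (t + 1) → ℝ := fun i => α i.castSucc with hα'_def
    obtain ⟨C', hC', hIH⟩ := IH α' (fun i => hα i.castSucc)
    obtain ⟨Cc, hCc, hconv⟩ := conv_full a (expB t α') (hα _) (expB_ne t α' (fun i => hα i.castSucc))
    refine ⟨C' * Cc, by positivity, fun ℓ hℓ => ?_⟩
    rcases eq_or_lt_of_le hℓ with h1 | h2
    · -- ℓ = 1
      rw [← h1]
      rw [compSum_succ]
      norm_num
      positivity
    · -- ℓ ≥ 2
      have hℓ2 : 2 ≤ ℓ := h2
      rw [compSum_succ, expB_succ t α hα]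
      calc ∑ m ∈ Finset.Icc 1 (ℓ - 1), (m : ℝ) ^ a * compSum t α' (ℓ - m)
          ≤ ∑ m ∈ Finset.Icc 1 (ℓ - 1), (m : ℝ) ^ a * (C' * ((ℓ - m : ℕ) : ℝ) ^ (expB t α')) := by
            apply Finset.sum_le_sum
            intro m hm
            obtain ⟨hm1, hm2⟩ := Finset.mem_Icc.mp hm
            exact mul_le_mul_of_nonneg_left (hIH (ℓ - m) (by omega))
              (Real.rpow_nonneg (Nat.cast_nonneg m) a)
        _ = C' * ∑ m ∈ Finset.Icc 1 (ℓ - 1), (m : ℝ) ^ a * ((ℓ - m : ℕ) : ℝ) ^ (expB t α') := by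
            rw [Finset.mul_sum]
            apply Finset.sum_congr rfl
            intros; ring
        _ ≤ C' * (Cc * (ℓ : ℝ) ^ (max a (max (expB t α') (a + expB t α' + 1)))) :=
            mul_le_mul_of_nonneg_left (hconv ℓ hℓ2) (le_of_lt hC')
        _ = C' * Cc * (ℓ : ℝ) ^ (max a (max (expB t α') (a + expB t α' + 1))) := by ring

open Filter Asymptotics

/-- Lemma on sums over compositions: if no `α_j` equals `-1` and
`s = #{j : α_j > -1}`, then `∑_{ℓ_0+⋯+ℓ_t=ℓ} ℓ_0^{α_0} ⋯ ℓ_t^{α_t}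
= O(ℓ^{s-1+∑_{α_j>-1} α_j})` (and `= O(ℓ^{max_j α_j})` in the degenerate case `s = 0`). -/
theorem stmt_13 (t : ℕ) (α : Fin (t + 1) → ℝ) (hα : ∀ j, α j ≠ -1) :
    (fun ℓ : ℕ =>
        ∑ f ∈ (Fintype.piFinset fun _ : Fin (t + 1) => Finset.Icc 1 ℓ).filter
            (fun f => ∑ i, f i = ℓ),
          ∏ i, (f i : ℝ) ^ (α i)) =O[atTop]
      (fun ℓ : ℕ =>
        (ℓ : ℝ) ^
          (if (Finset.univ.filter fun j => -1 < α j).Nonempty then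
            ((Finset.univ.filter fun j => -1 < α j).card : ℝ) - 1 +
              ∑ j ∈ Finset.univ.filter (fun j => -1 < α j), α j
          else Finset.univ.sup' Finset.univ_nonempty α)) := by
  obtain ⟨C, hC, h⟩ := key_bound t α hα
  rw [Asymptotics.isBigO_iff]
  refine ⟨C, ?_⟩
  filter_upwards [Filter.eventually_ge_atTop 1] with ℓ hℓ
  have h2 : 0 ≤ compSum t α ℓ := compSum_nonneg t α ℓ
  have h3 : (0:ℝ) ≤ (ℓ : ℝ) ^ (expB t α) := Real.rpow_nonneg (Nat.cast_nonneg _) _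
  calc ‖compSum t α ℓ‖ = compSum t α ℓ := Real.norm_of_nonneg h2
    _ ≤ C * ((ℓ : ℝ) ^ expB t α) := h ℓ hℓ
    _ = C * ‖(ℓ : ℝ) ^ expB t α‖ := by rw [Real.norm_of_nonneg h3]
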